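/- arXiv:2603.17377 — 2 statements merged into one kernel-verified Lean document; each statement's English description precedes it below -/
import Mathlib

section
/- If s_1, ..., s_{n+1} are exchangeable real-valued random variables and q̂ is the ⌈(1-α)(n+1)⌉-th smallest value among s_1, ..., s_n, then P(s_{n+1} ≤ q̂) ≥ 1 - α. -/
open Finset

namespace SCP

lemma count_eq {N : ℕ} (f : Fin N → ℝ) (p : ℝ → Prop) [DecidablePred p] :
    Multiset.countP p ((List.ofFn f : List ℝ) : Multiset ℝ) =
      (Finset.univ.filter (fun i => p (f i))).card := by
  rw [← Fin.univ_val_map, Multiset.countP_map]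
  rfl

lemma count_eq_get (l : List ℝ) (p : ℝ → Prop) [DecidablePred p] :
    Multiset.countP p (l : Multiset ℝ) = (Finset.univ.filter (fun i => p (l.get i))).card := by
  conv_lhs => rw [← List.ofFn_get l]
  rw [count_eq]

/-- in a sorted list, `t ≤ l[m]` iff at most `m` entries are `< t`. -/
lemma sorted_lt_iff {l : List ℝ} (hs : l.Pairwise (· ≤ ·)) {m : ℕ} (hm : m < l.length) (t : ℝ) :
    t ≤ l.get ⟨m, hm⟩ ↔ (Finset.univ.filter (fun i => l.get i < t)).card ≤ m := by
  constructor
  · intro h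
    have hsub : (Finset.univ.filter (fun i => l.get i < t)) ⊆ Finset.Iio ⟨m, hm⟩ := by
      intro j hj
      simp only [mem_filter, mem_univ, true_and] at hj
      simp only [mem_Iio]
      by_contra hc
      push_neg at hc
      exact absurd (lt_of_le_of_lt (le_trans h (hs.rel_get_of_le hc)) hj) (lt_irrefl _)
    calc (Finset.univ.filter (fun i => l.get i < t)).card
        ≤ (Finset.Iio (⟨m, hm⟩ : Fin l.length)).card := Finset.card_le_card hsub
      _ = m := Fin.card_Iio _
  · intro h
    by_contra hc
    push_neg at hc
    have hsub : Finset.Iic (⟨m, hm⟩ : Fin l.length) ⊆ Finset.univ.filter (fun i => l.get i < t) := by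
      intro j hj
      simp only [mem_Iic] at hj
      simp only [mem_filter, mem_univ, true_and]
      exact lt_of_le_of_lt (hs.rel_get_of_le hj) hc
    have h2 := (Finset.card_le_card hsub).trans h
    rw [Fin.card_Iic] at h2
    simp only [Fin.val_mk] at h2
    omega

/-- in a sorted list, at least `m+1` entries are `≤ l[m]`. -/
lemma sorted_le_card {l : List ℝ} (hs : l.Pairwise (· ≤ ·)) {m : ℕ} (hm : m < l.length) :
    m + 1 ≤ (Finset.univ.filter (fun i => l.get i ≤ l.get ⟨m, hm⟩)).card := by
  have hsub : Finset.Iic (⟨m, hm⟩ : Fin l.length) ⊆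
      Finset.univ.filter (fun i => l.get i ≤ l.get ⟨m, hm⟩) := by
    intro j hj
    simp only [mem_Iic] at hj
    simp only [mem_filter, mem_univ, true_and]
    exact hs.rel_get_of_le hj
  have h2 := Finset.card_le_card hsub
  rw [Fin.card_Iic] at h2
  simpa using h2

end SCP

namespace SCP
open Finset

lemma event_iff (n : ℕ) (v : Fin (n + 1) → ℝ) (m : ℕ) (hm : m < n) :
    (v (Fin.last n) ≤
      (((List.ofFn fun i : Fin n => v i.castSucc : List ℝ) : Multiset ℝ).sort (· ≤ ·)).getD m 0)
      ↔ (Finset.univ.filter fun i => v i < v (Fin.last n)).card ≤ m := by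
  set t := v (Fin.last n) with ht
  set M : Multiset ℝ := ((List.ofFn fun i : Fin n => v i.castSucc : List ℝ) : Multiset ℝ) with hM
  set l := M.sort (· ≤ ·) with hl
  have hsort : l.Pairwise (· ≤ ·) := Multiset.pairwise_sort _ _
  have hlen : l.length = n := by
    rw [hl, Multiset.length_sort, hM, Multiset.coe_card, List.length_ofFn]
  have hm' : m < l.length := hlen ▸ hm
  rw [List.getD_eq_get (l := l) (d := 0) ⟨m, hm'⟩, sorted_lt_iff hsort hm' t]
  have h1 : (Finset.univ.filter (fun i => l.get i < t)).card
      = Multiset.countP (· < t) M := by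
    rw [← count_eq_get l (· < t)]
    congr 1
    rw [hl, Multiset.sort_eq]
  have h2 : Multiset.countP (· < t) M
      = (Finset.univ.filter (fun i : Fin n => v i.castSucc < t)).card := count_eq _ _
  have h3 : (Finset.univ.filter (fun i : Fin (n+1) => v i < t)).card
      = (Finset.univ.filter (fun i : Fin n => v i.castSucc < t)).card := by
    rw [Fin.univ_castSuccEmb, Finset.filter_cons, if_neg (by rw [ht]; exact lt_irrefl _),
      Finset.filter_map, Finset.card_map]
    rfl
  omega

/-- pointwise: at least `m+1` of the indices have "strictly-below count" at most `m`. -/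
lemma count_low_rank (N : ℕ) (v : Fin N → ℝ) (m : ℕ) (hm : m < N) :
    m + 1 ≤ (Finset.univ.filter fun j =>
      (Finset.univ.filter fun i => v i < v j).card ≤ m).card := by
  set M : Multiset ℝ := ((List.ofFn v : List ℝ) : Multiset ℝ) with hM
  set l := M.sort (· ≤ ·) with hl
  have hsort : l.Pairwise (· ≤ ·) := Multiset.pairwise_sort _ _
  have hlen : l.length = N := by
    rw [hl, Multiset.length_sort, hM, Multiset.coe_card, List.length_ofFn]
  have hm' : m < l.length := hlen ▸ hm
  set t := l.get ⟨m, hm'⟩ with htdef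
  have hMl : (l : Multiset ℝ) = M := by rw [hl, Multiset.sort_eq]
  -- (i) at least m+1 indices j have v j ≤ t
  have h1 : m + 1 ≤ (Finset.univ.filter fun j => v j ≤ t).card := by
    have := sorted_le_card hsort hm'
    rw [← htdef] at this
    have he : (Finset.univ.filter (fun i => l.get i ≤ t)).card
        = (Finset.univ.filter fun j => v j ≤ t).card := by
      rw [← count_eq_get l (· ≤ t), hMl, hM, count_eq]
    omega
  -- (ii) if v j ≤ t then low rank
  have h2 : (Finset.univ.filter fun j => v j ≤ t) ⊆
      (Finset.univ.filter fun j => (Finset.univ.filter fun i => v i < v j).card ≤ m) := by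
    intro j hj
    simp only [mem_filter, mem_univ, true_and] at hj ⊢
    have hsub : (Finset.univ.filter fun i => v i < v j) ⊆
        (Finset.univ.filter fun i => v i < t) := by
      intro i hi
      simp only [mem_filter, mem_univ, true_and] at hi ⊢
      exact lt_of_lt_of_le hi hj
    have hc : (Finset.univ.filter fun i => v i < t).card ≤ m := by
      have := (sorted_lt_iff hsort hm' t).mp le_rfl
      have he : (Finset.univ.filter (fun i => l.get i < t)).card
          = (Finset.univ.filter fun i => v i < t).card := by
        rw [← count_eq_get l (· < t), hMl, hM, count_eq]
      omega
    exact le_trans (Finset.card_le_card hsub) hc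
  exact le_trans h1 (Finset.card_le_card h2)

end SCP

namespace SCP
open Finset MeasureTheory

lemma perm_count {N : ℕ} (σ : Equiv.Perm (Fin N)) (p : Fin N → Prop) [DecidablePred p] :
    (Finset.univ.filter fun i => p (σ i)).card = (Finset.univ.filter p).card := by
  have h : (Finset.univ.filter fun i => p (σ i)) =
      (Finset.univ.filter p).map σ.symm.toEmbedding := by
    ext x
    simp only [mem_filter, mem_univ, true_and, Finset.mem_map, Equiv.coe_toEmbedding]
    constructor
    · intro hx; exact ⟨σ x, hx, σ.symm_apply_apply x⟩
    · rintro ⟨a, ha, rfl⟩; simpa using ha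
  rw [h, Finset.card_map]

lemma meas_B {N : ℕ} (j : Fin N) (m : ℕ) :
    MeasurableSet {v : Fin N → ℝ | (Finset.univ.filter fun i => v i < v j).card ≤ m} := by
  have hmeas : Measurable fun v : Fin N → ℝ =>
      (Finset.univ.filter fun i => v i < v j).card := by
    simp_rw [Finset.card_filter]
    apply Finset.measurable_sum
    intro i _
    exact Measurable.ite
      (measurableSet_lt (measurable_pi_apply i) (measurable_pi_apply j))
      measurable_const measurable_const
  have : {v : Fin N → ℝ | (Finset.univ.filter fun i => v i < v j).card ≤ m} =
      (fun v : Fin N → ℝ => (Finset.univ.filter fun i => v i < v j).card) ⁻¹' (Set.Iic m) := rfl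
  rw [this]
  exact hmeas MeasurableSet.of_discrete

end SCP

open MeasureTheory
open scoped ENNReal

/-- Split conformal prediction coverage lower bound:
if `s 0, ..., s n` (that is, `n+1` variables) are exchangeable and `q̂` is the
`⌈(1-α)(n+1)⌉`-th smallest value among the first `n` of them, then
`P(s_{n+1} ≤ q̂) ≥ 1 - α`. -/
theorem split_conformal_coverage_lower_bound
    {Ω : Type*} [MeasurableSpace Ω] (μ : Measure Ω) [IsProbabilityMeasure μ]
    (n : ℕ) (s : Fin (n + 1) → Ω → ℝ)
    (hmeas : ∀ i, Measurable (s i))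
    (hexch : ∀ σ : Equiv.Perm (Fin (n + 1)),
      Measure.map (fun ω => fun i => s (σ i) ω) μ =
        Measure.map (fun ω => fun i => s i ω) μ)
    (α : ℝ) (hα : α ∈ Set.Ioo (0 : ℝ) 1)
    (hk : (1 - α) * (n + 1 : ℝ) ≤ n)
    (qhat : Ω → ℝ)
    (hqhat : ∀ ω, qhat ω =
      (((List.ofFn fun i : Fin n => s i.castSucc ω) : Multiset ℝ).sort (· ≤ ·)).getD
        (⌈(1 - α) * (n + 1 : ℝ)⌉₊ - 1) 0) :
    ENNReal.ofReal (1 - α) ≤ μ {ω | s (Fin.last n) ω ≤ qhat ω} := by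
  classical
  obtain ⟨hα0, hα1⟩ := hα
  have hsub : (0:ℝ) < 1 - α := by linarith
  set k := ⌈(1 - α) * (n + 1 : ℝ)⌉₊ with hkdef
  have hkpos : 0 < k := Nat.ceil_pos.mpr (by positivity)
  have hkn : k ≤ n := Nat.ceil_le.mpr hk
  set m := k - 1 with hmdef
  have hm1 : m + 1 = k := Nat.succ_pred_eq_of_pos hkpos
  have hmn : m < n := by omega
  set S : Ω → (Fin (n+1) → ℝ) := fun ω i => s i ω with hSdef
  have hS : Measurable S := measurable_pi_lambda _ hmeas
  set B : Fin (n+1) → Set (Fin (n+1) → ℝ) :=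
    fun j => {v | (Finset.univ.filter fun i => v i < v j).card ≤ m} with hBdef
  set A : Fin (n+1) → Set Ω := fun j => S ⁻¹' B j with hAdef
  have hBmeas : ∀ j, MeasurableSet (B j) := fun j => SCP.meas_B j m
  have hAmeas : ∀ j, MeasurableSet (A j) := fun j => hS (hBmeas j)
  have hev : {ω | s (Fin.last n) ω ≤ qhat ω} = A (Fin.last n) := by
    ext ω
    simp only [Set.mem_setOf_eq, hAdef, Set.mem_preimage, hBdef, Set.mem_setOf_eq, hqhat ω]
    exact SCP.event_iff n (S ω) m hmn
  rw [hev]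
  have hsame : ∀ j, μ (A j) = μ (A (Fin.last n)) := by
    intro j
    set σ : Equiv.Perm (Fin (n+1)) := Equiv.swap (Fin.last n) j with hσdef
    have hσS : Measurable fun ω => fun i => s (σ i) ω :=
      measurable_pi_lambda _ fun i => hmeas _
    have h := congrArg (fun ν : Measure (Fin (n+1) → ℝ) => ν (B (Fin.last n))) (hexch σ)
    rw [Measure.map_apply hσS (hBmeas _), Measure.map_apply hS (hBmeas _)] at h
    have hpre : (fun ω => fun i => s (σ i) ω) ⁻¹' B (Fin.last n) = A j := by
      ext ω
      simp only [Set.mem_preimage, hBdef, Set.mem_setOf_eq, hAdef, hSdef]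
      have hσlast : σ (Fin.last n) = j := Equiv.swap_apply_left _ _
      have hc : (Finset.univ.filter fun i => s (σ i) ω < s j ω).card
          = (Finset.univ.filter fun i => s i ω < s j ω).card :=
        SCP.perm_count σ (fun i => s i ω < s j ω)
      simp only [hσlast]
      rw [hc]
    rw [hpre] at h
    exact h
  have hsum : ∀ ω, ((k : ℝ≥0∞)) ≤ ∑ j : Fin (n+1), (A j).indicator (1 : Ω → ℝ≥0∞) ω := by
    intro ω
    have hcount := SCP.count_low_rank (n+1) (S ω) m (by omega)
    have hind : ∑ j : Fin (n+1), (A j).indicator (1 : Ω → ℝ≥0∞) ω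
        = ((Finset.univ.filter fun j => ω ∈ A j).card : ℝ≥0∞) := by
      rw [Finset.card_filter]
      push_cast
      apply Finset.sum_congr rfl
      intro j _
      by_cases hj : ω ∈ A j
      · simp [hj]
      · simp [hj]
    rw [hind]
    have heq : (Finset.univ.filter fun j => ω ∈ A j)
        = (Finset.univ.filter fun j =>
            (Finset.univ.filter fun i => S ω i < S ω j).card ≤ m) :=
      Finset.filter_congr (fun j _ => Iff.rfl)
    rw [heq]
    exact_mod_cast le_trans (le_of_eq hm1.symm) hcount
  have hle : (k : ℝ≥0∞) ≤ ∑ j : Fin (n+1), μ (A j) := by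
    have hmeasind : ∀ j ∈ Finset.univ, Measurable fun ω => (A j).indicator (1 : Ω → ℝ≥0∞) ω :=
      fun j _ => measurable_one.indicator (hAmeas j)
    have heq2 : ∑ j : Fin (n+1), μ (A j)
        = ∫⁻ ω, ∑ j : Fin (n+1), (A j).indicator (1 : Ω → ℝ≥0∞) ω ∂μ := by
      rw [lintegral_finset_sum _ hmeasind]
      exact Finset.sum_congr rfl fun j _ => (lintegral_indicator_one (hAmeas j)).symm
    rw [heq2]
    calc (k : ℝ≥0∞) = ∫⁻ _, (k : ℝ≥0∞) ∂μ := by rw [lintegral_const, measure_univ, mul_one]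
      _ ≤ _ := lintegral_mono hsum
  have hconst : ∑ j : Fin (n+1), μ (A j) = ((n:ℝ≥0∞)+1) * μ (A (Fin.last n)) := by
    calc ∑ j : Fin (n+1), μ (A j) = ∑ _j : Fin (n+1), μ (A (Fin.last n)) :=
          Finset.sum_congr rfl (fun j _ => hsame j)
      _ = ((n:ℝ≥0∞)+1) * μ (A (Fin.last n)) := by
          rw [Finset.sum_const, Finset.card_univ, Fintype.card_fin, nsmul_eq_mul]
          push_cast
          ring
  rw [hconst] at hle
  have h1 : ENNReal.ofReal (1 - α) * ((n:ℝ≥0∞)+1) ≤ (k : ℝ≥0∞) := by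
    have h0 : ENNReal.ofReal ((1 - α) * ((n:ℝ) + 1)) ≤ (k : ℝ≥0∞) := by
      rw [← ENNReal.ofReal_natCast k]
      exact ENNReal.ofReal_le_ofReal (Nat.le_ceil _)
    rw [ENNReal.ofReal_mul (le_of_lt hsub)] at h0
    have hcast : ENNReal.ofReal ((n:ℝ)+1) = (n:ℝ≥0∞)+1 := by
      rw [show ((n:ℝ)+1) = ((n+1:ℕ):ℝ) by push_cast; ring, ENNReal.ofReal_natCast]
      push_cast
      ring
    rwa [hcast] at h0
  have h2 : ((n:ℝ≥0∞)+1) * ENNReal.ofReal (1 - α) ≤ ((n:ℝ≥0∞)+1) * μ (A (Fin.last n)) := by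
    rw [mul_comm]
    exact h1.trans hle
  have hne : ((n:ℝ≥0∞)+1) ≠ 0 := by simp
  have hnt : ((n:ℝ≥0∞)+1) ≠ ⊤ := by
    simp [ENNReal.add_ne_top, ENNReal.natCast_ne_top]
  exact (ENNReal.mul_le_mul_iff_right hne hnt).mp h2
end

section
/- Let s_1, ..., s_{n+1} be exchangeable random variables with almost surely no ties. Then the rank of s_{n+1} among all n+1 values is uniformly distributed on {1, ..., n+1}, and consequently P(s_{n+1} ≤ q̂) ≤ 1 - α + 1/(n+1), where q̂ is the ⌈(1-α)(n+1)⌉-th smallest of s_1, ..., s_n. -/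
open MeasureTheory
open scoped ENNReal

namespace SCAux
open Finset

noncomputable def rankAt {n : ℕ} (j : Fin (n+1)) (v : Fin (n+1) → ℝ) : ℕ :=
  (univ.filter fun i => v i ≤ v j).card

lemma rankAt_pos {n : ℕ} (j : Fin (n+1)) (v : Fin (n+1) → ℝ) : 1 ≤ rankAt j v :=
  Finset.card_pos.mpr ⟨j, by simp⟩

lemma rankAt_le {n : ℕ} (j : Fin (n+1)) (v : Fin (n+1) → ℝ) : rankAt j v ≤ n + 1 := by
  have := Finset.card_filter_le (univ : Finset (Fin (n+1))) (fun i => v i ≤ v j)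
  simpa [rankAt] using this

lemma rankAt_lt_rankAt {n : ℕ} {v : Fin (n+1) → ℝ} {j j' : Fin (n+1)} (h : v j < v j') :
    rankAt j v < rankAt j' v := by
  apply Finset.card_lt_card
  constructor
  · intro i hi
    simp only [mem_filter, mem_univ, true_and] at *
    exact le_trans hi h.le
  · intro hsub
    have := hsub (by simp : j' ∈ univ.filter fun i => v i ≤ v j')
    simp only [mem_filter, mem_univ, true_and] at this
    exact absurd (lt_of_le_of_lt this h) (lt_irrefl _)

lemma rankAt_injective {n : ℕ} {v : Fin (n+1) → ℝ} (hv : Function.Injective v) :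
    Function.Injective fun j => rankAt j v := by
  intro j j' h
  by_contra hne
  rcases lt_trichotomy (v j) (v j') with hlt | heq | hgt
  · exact absurd h (Nat.ne_of_lt (rankAt_lt_rankAt hlt))
  · exact hne (hv heq)
  · exact absurd h.symm (Nat.ne_of_lt (rankAt_lt_rankAt hgt))

lemma rankAt_surj {n : ℕ} {v : Fin (n+1) → ℝ} (hv : Function.Injective v)
    {k : ℕ} (hk : k ∈ Finset.Icc 1 (n+1)) : ∃ j, rankAt j v = k := by
  have hsub : (univ.image fun j => rankAt j v) ⊆ Finset.Icc 1 (n+1) := by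
    intro m hm
    simp only [mem_image, mem_univ, true_and] at hm
    obtain ⟨j, rfl⟩ := hm
    exact Finset.mem_Icc.mpr ⟨rankAt_pos j v, rankAt_le j v⟩
  have hcard : (Finset.Icc 1 (n+1)).card ≤ (univ.image fun j => rankAt j v).card := by
    rw [Finset.card_image_of_injective _ (rankAt_injective hv)]
    simp [Nat.card_Icc]
  have := Finset.eq_of_subset_of_card_le hsub hcard
  have hk' : k ∈ univ.image fun j => rankAt j v := this ▸ hk
  simpa using hk'

lemma perm_rankAt {n : ℕ} (σ : Equiv.Perm (Fin (n+1))) (v : Fin (n+1) → ℝ) :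
    rankAt (Fin.last n) (fun i => v (σ i)) = rankAt (σ (Fin.last n)) v := by
  unfold rankAt
  apply Finset.card_bij (fun i _ => σ i)
  · intro i hi; simp only [mem_filter, mem_univ, true_and] at *; exact hi
  · intro a _ b _ h; exact σ.injective h
  · intro b hb
    refine ⟨σ.symm b, ?_, by simp⟩
    simp only [mem_filter, mem_univ, true_and] at *
    simpa using hb

lemma measurable_rankAt {n : ℕ} (j : Fin (n+1)) : Measurable (rankAt (n := n) j) := by
  have h : rankAt (n := n) j = fun v => ∑ i : Fin (n+1), if v i ≤ v j then 1 else 0 := by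
    funext v; rw [rankAt, Finset.card_filter]
  rw [h]
  exact Finset.measurable_sum _ fun i _ =>
    Measurable.ite (measurableSet_le (measurable_pi_apply i) (measurable_pi_apply j))
      measurable_const measurable_const

lemma rank_le_of_le_sorted {n : ℕ} {v : Fin (n+1) → ℝ} (hv : Function.Injective v)
    {kk : ℕ} (h1 : 1 ≤ kk) (h2 : kk ≤ n)
    (hle : v (Fin.last n) ≤
      (((List.ofFn fun i : Fin n => v i.castSucc) : Multiset ℝ).sort (· ≤ ·)).getD (kk - 1) 0) :
    rankAt (Fin.last n) v ≤ kk := by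
  set L : List ℝ := List.ofFn fun i : Fin n => v i.castSucc with hL
  set S : List ℝ := ((L : Multiset ℝ).sort (· ≤ ·)) with hS
  have hcoe : (S : Multiset ℝ) = (L : Multiset ℝ) := Multiset.sort_eq _ _
  have hlen : S.length = n := by
    rw [hS, Multiset.length_sort]; simp [hL]
  have hidx : kk - 1 < S.length := by omega
  have hgetD : S.getD (kk - 1) 0 = S.get ⟨kk - 1, hidx⟩ := by
    rw [List.getD_eq_getElem _ _ hidx]; rfl
  have hsorted : S.Pairwise (· ≤ ·) := Multiset.pairwise_sort _ _
  have hnodupL : L.Nodup := by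
    rw [hL, List.nodup_ofFn]
    intro a b hab
    exact Fin.castSucc_injective n (hv hab)
  have hnodup : S.Nodup := by
    rw [← Multiset.coe_nodup, hcoe, Multiset.coe_nodup]; exact hnodupL
  set q : ℝ := S.get ⟨kk - 1, hidx⟩ with hq
  rw [hgetD] at hle
  set T : Finset (Fin n) := univ.filter fun i => v i.castSucc ≤ v (Fin.last n) with hT
  have hrank : rankAt (Fin.last n) v = T.card + 1 := by
    unfold rankAt
    rw [Fin.univ_succAbove n (Fin.last n), Finset.filter_cons, if_pos le_rfl,
      Finset.card_cons, Finset.filter_map, Finset.card_map]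
    congr 2
    ext i
    simp [hT, Fin.succAboveEmb, Fin.succAbove_last]
  have hTlt : ∀ i ∈ T, v i.castSucc < v (Fin.last n) := by
    intro i hi
    rw [hT, mem_filter] at hi
    rcases lt_or_eq_of_le hi.2 with h | h
    · exact h
    · exact absurd (hv h) (Fin.ne_of_lt (Fin.castSucc_lt_last i))
  have hmem : ∀ i : Fin n, v i.castSucc ∈ S := by
    intro i
    have : v i.castSucc ∈ L := by rw [hL, List.mem_ofFn]; exact ⟨i, rfl⟩
    rw [← Multiset.mem_coe, hcoe, Multiset.mem_coe]; exact this
  have hcardT : T.card ≤ kk - 1 := by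
    have hinj := Finset.card_le_card_of_injOn (s := T) (t := Finset.range (kk - 1))
      (fun i => S.idxOf (v i.castSucc)) ?_ ?_
    · simpa using hinj
    · intro i hi
      have hlt : S.idxOf (v i.castSucc) < S.length := List.idxOf_lt_length_iff.mpr (hmem i)
      rw [Finset.mem_coe, Finset.mem_range]
      by_contra hge
      push_neg at hge
      have hmono : q ≤ S.get ⟨S.idxOf (v i.castSucc), hlt⟩ :=
        hsorted.rel_get_of_le (by simpa using hge)
      rw [List.idxOf_get hlt] at hmono
      exact absurd (lt_of_le_of_lt hmono (hTlt i hi)) (not_lt.mpr hle)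
    · intro a ha b hb hab
      have hlta : S.idxOf (v a.castSucc) < S.length := List.idxOf_lt_length_iff.mpr (hmem a)
      have hltb : S.idxOf (v b.castSucc) < S.length := List.idxOf_lt_length_iff.mpr (hmem b)
      have : S.get ⟨S.idxOf (v a.castSucc), hlta⟩ = S.get ⟨S.idxOf (v b.castSucc), hltb⟩ := by
        congr 1
        exact Fin.ext hab
      rw [List.idxOf_get hlta, List.idxOf_get hltb] at this
      exact Fin.castSucc_injective n (hv this)
  omega

end SCAux

open SCAux

/-- Split conformal prediction rank uniformity and coverage upper bound:
for exchangeable `s 0, ..., s n` with almost surely no ties, the rank of the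
last variable among all `n+1` values is uniform on `{1, ..., n+1}`, and
`P(s_{n+1} ≤ q̂) ≤ 1 - α + 1/(n+1)` where `q̂` is the `⌈(1-α)(n+1)⌉`-th
smallest of the first `n` values. -/
theorem split_conformal_rank_uniform_and_upper_bound
    {Ω : Type*} [MeasurableSpace Ω] (μ : Measure Ω) [IsProbabilityMeasure μ]
    (n : ℕ) (s : Fin (n + 1) → Ω → ℝ)
    (hmeas : ∀ i, Measurable (s i))
    (hexch : ∀ σ : Equiv.Perm (Fin (n + 1)),
      Measure.map (fun ω => fun i => s (σ i) ω) μ =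
        Measure.map (fun ω => fun i => s i ω) μ)
    (hties : ∀ i j : Fin (n + 1), i ≠ j → μ {ω | s i ω = s j ω} = 0)
    (α : ℝ) (hα : α ∈ Set.Ioo (0 : ℝ) 1)
    (hk : (1 - α) * (n + 1 : ℝ) ≤ n)
    (rank : Ω → ℕ)
    (hrank : ∀ ω, rank ω =
      (Finset.univ.filter fun i : Fin (n + 1) =>
        s i ω ≤ s (Fin.last n) ω).card)
    (qhat : Ω → ℝ)
    (hqhat : ∀ ω, qhat ω =
      (((List.ofFn fun i : Fin n => s i.castSucc ω) : Multiset ℝ).sort (· ≤ ·)).getD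
        (⌈(1 - α) * (n + 1 : ℝ)⌉₊ - 1) 0) :
    (∀ k ∈ Finset.Icc 1 (n + 1), μ {ω | rank ω = k} = (n + 1 : ℝ≥0∞)⁻¹) ∧
      μ {ω | s (Fin.last n) ω ≤ qhat ω} ≤
        ENNReal.ofReal (1 - α + 1 / (n + 1 : ℝ)) := by
  -- the joint random vector
  set F : Ω → (Fin (n+1) → ℝ) := fun ω i => s i ω with hF
  have hFmeas : Measurable F := measurable_pi_lambda _ hmeas
  -- the good set where all values are distinct
  set G : Set Ω := ⋂ (i) (j) (_ : i ≠ j), {ω | s i ω ≠ s j ω} with hG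
  have hGmeas : MeasurableSet G := by
    refine MeasurableSet.iInter fun i => MeasurableSet.iInter fun j =>
      MeasurableSet.iInter fun _ => ?_
    exact (measurableSet_eq_fun (hmeas i) (hmeas j)).compl
  have hGc : μ Gᶜ = 0 := by
    rw [hG, Set.compl_iInter]
    refine measure_iUnion_null fun i => ?_
    rw [Set.compl_iInter]
    refine measure_iUnion_null fun j => ?_
    rw [Set.compl_iInter]
    refine measure_iUnion_null fun hij => ?_
    have : {ω | s i ω ≠ s j ω}ᶜ = {ω | s i ω = s j ω} := by
      ext ω; simp
    rw [this]
    exact hties i j hij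
  have hGinj : ∀ ω ∈ G, Function.Injective (F ω) := by
    intro ω hω i j hij
    by_contra hne
    rw [hG] at hω
    simp only [Set.mem_iInter] at hω
    exact hω i j hne hij
  have hGone : μ G = 1 := by
    have := measure_add_measure_compl hGmeas (μ := μ)
    rw [hGc, add_zero] at this
    rw [this, measure_univ]
  -- the rank events
  set A : Fin (n+1) → ℕ → Set Ω := fun j k => {ω | rankAt j (F ω) = k} with hA
  have hAmeas : ∀ j k, MeasurableSet (A j k) := by
    intro j k
    exact hFmeas ((measurable_rankAt j) (measurableSet_singleton k))
  -- exchangeability: all rank events have the same measure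
  have hAeq : ∀ j k, μ (A j k) = μ (A (Fin.last n) k) := by
    intro j k
    set σ : Equiv.Perm (Fin (n+1)) := Equiv.swap (Fin.last n) j with hσ
    have hσlast : σ (Fin.last n) = j := Equiv.swap_apply_left _ _
    have hmeasperm : Measurable (fun ω => fun i => s (σ i) ω) :=
      measurable_pi_lambda _ fun i => hmeas (σ i)
    have hB : MeasurableSet (rankAt (n := n) (Fin.last n) ⁻¹' {k}) :=
      (measurable_rankAt _) (measurableSet_singleton k)
    have h1 : μ (A (Fin.last n) k) =
        Measure.map (fun ω => fun i => s i ω) μ (rankAt (Fin.last n) ⁻¹' {k}) := by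
      rw [Measure.map_apply hFmeas hB]
      rfl
    rw [h1, ← hexch σ, Measure.map_apply hmeasperm hB]
    have : (fun ω => fun i => s (σ i) ω) ⁻¹' (rankAt (Fin.last n) ⁻¹' {k}) = A j k := by
      ext ω
      simp only [Set.mem_preimage, Set.mem_singleton_iff, hA, Set.mem_setOf_eq]
      rw [show (fun i => s (σ i) ω) = (fun i => (F ω) (σ i)) from rfl, perm_rankAt σ (F ω),
        hσlast]
    rw [this]
  -- part 1 : uniformity
  have part1 : ∀ k ∈ Finset.Icc 1 (n + 1), μ (A (Fin.last n) k) = (n + 1 : ℝ≥0∞)⁻¹ := by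
    intro k hkmem
    have hdisj : (↑(Finset.univ : Finset (Fin (n+1))) : Set (Fin (n+1))).PairwiseDisjoint
        (fun j => A j k ∩ G) := by
      intro j _ j' _ hjj'
      refine Set.disjoint_left.mpr fun ω hω hω' => ?_
      have h1 : rankAt j (F ω) = k := hω.1
      have h2 : rankAt j' (F ω) = k := hω'.1
      exact hjj' (rankAt_injective (hGinj ω hω.2) (h1.trans h2.symm))
    have hunion : (⋃ j ∈ (Finset.univ : Finset (Fin (n+1))), A j k ∩ G) = G := by
      apply Set.Subset.antisymm
      · exact Set.iUnion₂_subset fun j _ => Set.inter_subset_right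
      · intro ω hω
        obtain ⟨j, hj⟩ := rankAt_surj (hGinj ω hω) hkmem
        exact Set.mem_biUnion (Finset.mem_univ j) ⟨hj, hω⟩
    have hsum : ∑ j : Fin (n+1), μ (A j k ∩ G) = 1 := by
      rw [← measure_biUnion_finset hdisj fun j _ => (hAmeas j k).inter hGmeas, hunion, hGone]
    have hsame : ∀ j : Fin (n+1), μ (A j k ∩ G) = μ (A (Fin.last n) k) := by
      intro j
      rw [measure_inter_conull hGc, hAeq]
    rw [Finset.sum_congr rfl fun j _ => hsame j, Finset.sum_const, Finset.card_univ,
      Fintype.card_fin, nsmul_eq_mul] at hsum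
    have hne : ((n : ℝ≥0∞) + 1) ≠ 0 := (lt_of_lt_of_le zero_lt_one le_add_self).ne'
    have hnetop : ((n : ℝ≥0∞) + 1) ≠ ⊤ := by
      simp [ENNReal.add_ne_top]
    have : μ (A (Fin.last n) k) = ((n : ℝ≥0∞) + 1)⁻¹ * (((n : ℕ) + 1 : ℕ) * μ (A (Fin.last n) k)) := by
      push_cast
      rw [← mul_assoc, ENNReal.inv_mul_cancel hne hnetop, one_mul]
    rw [this, hsum, mul_one]
  have hrankA : ∀ k, {ω | rank ω = k} = A (Fin.last n) k := by
    intro k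
    ext ω
    simp only [Set.mem_setOf_eq, hA, hrank ω, rankAt, hF]
  constructor
  · intro k hkmem
    rw [hrankA k]
    exact part1 k hkmem
  -- part 2 : coverage upper bound
  · set kk : ℕ := ⌈(1 - α) * (n + 1 : ℝ)⌉₊ with hkk
    have hα1 : 0 < 1 - α := by linarith [hα.2]
    have hnpos : (0:ℝ) < (n:ℝ) + 1 := by positivity
    have hkk1 : 1 ≤ kk := Nat.one_le_ceil_iff.mpr (by positivity)
    have hkk2 : kk ≤ n := Nat.ceil_le.mpr hk
    have hsubset : {ω | s (Fin.last n) ω ≤ qhat ω} ∩ G ⊆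
        ⋃ m ∈ Finset.Icc 1 kk, A (Fin.last n) m := by
      intro ω hω
      have hinj := hGinj ω hω.2
      have hle : F ω (Fin.last n) ≤
          (((List.ofFn fun i : Fin n => F ω i.castSucc) : Multiset ℝ).sort (· ≤ ·)).getD
            (kk - 1) 0 := by
        have := hω.1
        rw [Set.mem_setOf_eq, hqhat ω] at this
        exact this
      have hub := rank_le_of_le_sorted hinj hkk1 hkk2 hle
      have hlb := rankAt_pos (Fin.last n) (F ω)
      refine Set.mem_biUnion (Finset.mem_Icc.mpr ⟨hlb, hub⟩) rfl
    calc μ {ω | s (Fin.last n) ω ≤ qhat ω}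
        = μ ({ω | s (Fin.last n) ω ≤ qhat ω} ∩ G) := (measure_inter_conull hGc).symm
      _ ≤ μ (⋃ m ∈ Finset.Icc 1 kk, A (Fin.last n) m) := measure_mono hsubset
      _ ≤ ∑ m ∈ Finset.Icc 1 kk, μ (A (Fin.last n) m) := measure_biUnion_finset_le _ _
      _ = ∑ m ∈ Finset.Icc 1 kk, (n + 1 : ℝ≥0∞)⁻¹ := by
          refine Finset.sum_congr rfl fun m hm => ?_
          refine part1 m ?_
          rw [Finset.mem_Icc] at hm ⊢
          exact ⟨hm.1, le_trans hm.2 (by omega)⟩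
      _ = (kk : ℝ≥0∞) * (n + 1 : ℝ≥0∞)⁻¹ := by
          rw [Finset.sum_const, Nat.card_Icc, nsmul_eq_mul]
          norm_num
      _ ≤ ENNReal.ofReal (1 - α + 1 / (n + 1 : ℝ)) := by
          have hkkreal : (kk : ℝ) ≤ (1 - α) * ((n:ℝ) + 1) + 1 :=
            le_of_lt (Nat.ceil_lt_add_one (by positivity))
          have hreal : (kk : ℝ) * ((n:ℝ) + 1)⁻¹ ≤ 1 - α + 1 / ((n:ℝ) + 1) := by
            rw [mul_inv_le_iff₀ hnpos]
            have : (1 - α + 1 / ((n:ℝ) + 1)) * ((n:ℝ) + 1) = (1 - α) * ((n:ℝ)+1) + 1 := by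
              field_simp
            rw [this]
            exact hkkreal
          have hLHS : (kk : ℝ≥0∞) * (n + 1 : ℝ≥0∞)⁻¹ =
              ENNReal.ofReal ((kk : ℝ) * ((n:ℝ) + 1)⁻¹) := by
            rw [ENNReal.ofReal_mul (by positivity), ENNReal.ofReal_inv_of_pos hnpos]
            congr 1
            · simp
            · congr 1
              push_cast
              ring_nf
              simp [ENNReal.ofReal_add, ENNReal.ofReal_natCast]
          rw [hLHS]
          exact ENNReal.ofReal_le_ofReal hreal
end
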